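/- arXiv:1912.05055 — 7 statements merged into one kernel-verified Lean document; each statement's English description precedes it below -/
import Mathlib

section
/- Let G₁, …, Gₙ be groups in which every abelian subgroup is finitely generated, and for each i let Aᵢ be a highest abelian subgroup of Gᵢ. Then the product A₁ × … × Aₙ is a highest abelian subgroup of G₁ × … × Gₙ. -/
open scoped TensorProduct

/-- The torsion-free rank of a subgroup `A`, i.e. the dimension of the
`ℚ`-vector space `A ⊗_ℤ ℚ` (for abelian `A`, computed via the abelianization,
which is isomorphic to `A` in that case). -/
noncomputable def subgroupRank {G : Type*} [Group G] (A : Subgroup G) : Cardinal :=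
  Module.rank ℚ (ℚ ⊗[ℤ] Additive (Abelianization A))

/-- An abelian subgroup `A ≤ G` is highest if no finite-index subgroup of `A`
is contained in an abelian subgroup of `G` of strictly greater rank. -/
def IsHighestAbelian {G : Type*} [Group G] (A : Subgroup G) : Prop :=
  IsMulCommutative A ∧
    ∀ B C : Subgroup G, B ≤ A → B.relIndex A ≠ 0 → IsMulCommutative C → B ≤ C →
      ¬ subgroupRank A < subgroupRank C

/-- `G` has the Abelian intersection property (AIP) if there exist finitely many
highest abelian subgroups of `G` whose intersection is the trivial subgroup. -/
def HasAIP (G : Type*) [Group G] : Prop :=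
  ∃ (k : ℕ) (A : Fin k → Subgroup G),
    (∀ i, IsHighestAbelian (A i)) ∧ (⨅ i, A i) = ⊥

open scoped IsMulCommutative

instance : Module.Flat ℤ ℚ := IsLocalization.flat _ (nonZeroDivisors ℤ)

universe u

noncomputable def rankQ (M : Type u) [AddCommGroup M] : Cardinal.{u} :=
  Module.rank ℚ (ℚ ⊗[ℤ] M)

lemma rankQ_le {M N : Type u} [AddCommGroup M] [AddCommGroup N] (f : M →+ N)
    (hf : Function.Injective f) : rankQ M ≤ rankQ N := by
  have hinj : Function.Injective (f.toIntLinearMap.baseChange ℚ) :=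
    Module.Flat.lTensor_preserves_injective_linearMap (M := ℚ) f.toIntLinearMap hf
  exact LinearMap.rank_le_of_injective _ hinj

lemma rankQ_congr {M N : Type u} [AddCommGroup M] [AddCommGroup N] (e : M ≃+ N) :
    rankQ M = rankQ N :=
  le_antisymm (rankQ_le e.toAddMonoidHom e.injective)
    (rankQ_le e.symm.toAddMonoidHom e.symm.injective)

lemma rankQ_pi {ι : Type} [Fintype ι] [DecidableEq ι] (M : ι → Type u)
    [∀ i, AddCommGroup (M i)] :
    rankQ (∀ i, M i) = Cardinal.sum fun i => rankQ (M i) := by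
  rw [rankQ, LinearEquiv.rank_eq (TensorProduct.piRight ℤ ℚ ℚ M), rank_pi]
  rfl

lemma subgroupRank_eq_rankQ {G : Type u} [Group G] (H : Subgroup G)
    (h : IsMulCommutative H) : subgroupRank H = rankQ (Additive ↥H) := by
  haveI := h
  exact (rankQ_congr (MulEquiv.toAdditive (Abelianization.equivOfComm (H := ↥H)))).symm

/-- If each `Aᵢ` is a highest abelian subgroup of `Gᵢ` (all abelian subgroups of the
`Gᵢ` being finitely generated), then `A₁ × … × Aₙ` is a highest abelian subgroup
of `G₁ × … × Gₙ`. -/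
theorem isHighestAbelian_pi {n : ℕ} (G : Fin n → Type*) [∀ i, Group (G i)]
    (hab : ∀ i, ∀ A : Subgroup (G i), IsMulCommutative A → A.FG)
    (A : ∀ i, Subgroup (G i)) (hA : ∀ i, IsHighestAbelian (A i)) :
    IsHighestAbelian (Subgroup.pi Set.univ A) := by
  classical
  haveI : ∀ i, IsMulCommutative (A i) := fun i => (hA i).1
  set P := Subgroup.pi Set.univ A with hP
  have hPcomm : IsMulCommutative P := by
    constructor
    constructor
    intro x y
    apply Subtype.ext
    funext i
    exact Subgroup.mul_comm_of_mem_isMulCommutative (A i)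
      ((Subgroup.mem_pi Set.univ).mp x.2 i (Set.mem_univ i))
      ((Subgroup.mem_pi Set.univ).mp y.2 i (Set.mem_univ i))
  refine ⟨hPcomm, ?_⟩
  intro B C hBA hrel hC hBC hlt
  haveI := hC
  let f : ∀ i, (∀ j, G j) →* G i := fun i => Pi.evalMonoidHom G i
  -- image subgroups
  have hBiA : ∀ i, B.map (f i) ≤ A i := by
    intro i x hx
    obtain ⟨y, hy, rfl⟩ := hx
    exact (Subgroup.mem_pi Set.univ).mp (hBA hy) i (Set.mem_univ i)
  -- relindex is nonzero
  have hrel_i : ∀ i, (B.map (f i)).relIndex (A i) ≠ 0 := by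
    intro i
    let g : ↥P →* ↥(A i) :=
      ((f i).comp P.subtype).codRestrict (A i)
        (fun x => (Subgroup.mem_pi Set.univ).mp x.2 i (Set.mem_univ i))
    have hgsurj : Function.Surjective g := by
      rintro ⟨a, ha⟩
      have hmem : Pi.mulSingle i a ∈ P := by
        rw [hP, Subgroup.mem_pi]
        intro j _
        rcases eq_or_ne j i with h | h
        · subst h; simpa using ha
        · simpa [Pi.mulSingle_eq_of_ne h] using one_mem (A j)
      exact ⟨⟨Pi.mulSingle i a, hmem⟩, Subtype.ext (Pi.mulSingle_eq_same i a)⟩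
    have hmap : (B.subgroupOf P).map g = (B.map (f i)).subgroupOf (A i) := by
      ext ⟨x, hx⟩
      simp only [Subgroup.mem_map, Subgroup.mem_subgroupOf]
      constructor
      · rintro ⟨⟨y, hy⟩, hyB, heq⟩
        exact ⟨y, hyB, congrArg Subtype.val heq⟩
      · rintro ⟨y, hyB, hyx⟩
        exact ⟨⟨y, hBA hyB⟩, hyB, Subtype.ext hyx⟩
    have hdvd : ((B.subgroupOf P).map g).index ∣ (B.subgroupOf P).index :=
      Subgroup.index_map_dvd _ hgsurj
    rw [hmap] at hdvd
    intro h0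
    have : (B.subgroupOf P).index = 0 := by
      rw [Subgroup.relIndex] at h0
      exact Nat.eq_zero_of_zero_dvd (h0 ▸ hdvd)
    exact hrel this
  -- key rank inequality on components
  have hcomp : ∀ i, subgroupRank (C.map (f i)) ≤ subgroupRank (A i) := by
    intro i
    have := (hA i).2 (B.map (f i)) (C.map (f i)) (hBiA i) (hrel_i i)
      inferInstance (Subgroup.map_mono hBC)
    exact not_lt.mp this
  -- equivalence between P and product of the A i
  let ψ : Additive ↥P ≃+ ∀ i, Additive ↥(A i) :=
  { toFun := fun x i => Additive.ofMul
      (⟨((Additive.toMul x : ↥P) : ∀ j, G j) i,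
        (Subgroup.mem_pi Set.univ).mp (Additive.toMul x).2 i (Set.mem_univ i)⟩ : ↥(A i))
    invFun := fun y => Additive.ofMul
      (⟨fun i => ((Additive.toMul (y i) : ↥(A i)) : G i),
        (Subgroup.mem_pi Set.univ).mpr (fun i _ => (Additive.toMul (y i)).2)⟩ : ↥P)
    left_inv := fun x => rfl
    right_inv := fun y => rfl
    map_add' := fun x y => rfl }
  -- embedding of C into the product of its projections
  let φ : Additive ↥C →+ ∀ i, Additive ↥(C.map (f i)) :=
  { toFun := fun x i => Additive.ofMul
      (⟨((Additive.toMul x : ↥C) : ∀ j, G j) i,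
        ⟨(Additive.toMul x : ↥C), (Additive.toMul x).2, rfl⟩⟩ : ↥(C.map (f i)))
    map_zero' := rfl
    map_add' := fun x y => rfl }
  have hφinj : Function.Injective φ := by
    intro x y h
    have h2 : ∀ i, ((Additive.toMul x : ↥C) : ∀ j, G j) i
        = ((Additive.toMul y : ↥C) : ∀ j, G j) i := fun i =>
      congrArg (fun z => ((Additive.toMul z : ↥(C.map (f i))) : G i)) (congrFun h i)
    exact Additive.toMul.injective (Subtype.ext (funext h2))
  -- compute ranks
  have hrankP : subgroupRank P = Cardinal.sum fun i => subgroupRank (A i) := by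
    rw [subgroupRank_eq_rankQ P hPcomm, rankQ_congr ψ, rankQ_pi]
    congr 1
    funext i
    exact (subgroupRank_eq_rankQ (A i) (hA i).1).symm
  have hrankC : subgroupRank C ≤ Cardinal.sum fun i => subgroupRank (C.map (f i)) := by
    rw [subgroupRank_eq_rankQ C hC]
    calc rankQ (Additive ↥C) ≤ rankQ (∀ i, Additive ↥(C.map (f i))) := rankQ_le φ hφinj
      _ = Cardinal.sum fun i => rankQ (Additive ↥(C.map (f i))) := rankQ_pi _
      _ = Cardinal.sum fun i => subgroupRank (C.map (f i)) := by
          congr 1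
          funext i
          exact (subgroupRank_eq_rankQ (C.map (f i)) inferInstance).symm
  have : subgroupRank C ≤ subgroupRank P := by
    rw [hrankP]
    exact hrankC.trans (Cardinal.sum_le_sum _ _ hcomp)
  exact absurd hlt (not_lt.mpr this)
end

section
/- Let G₁, …, Gₙ be groups in which every abelian subgroup is finitely generated, let G = G₁ × … × Gₙ, and let pᵢ : G → Gᵢ denote the i-th projection. If A is a highest abelian subgroup of G, then for every i the image pᵢ(A) is a highest abelian subgroup of Gᵢ. -/
open scoped TensorProduct

namespace IHAAux

open scoped IsMulCommutative

universe u

instance : Module.Flat ℤ ℚ := IsLocalization.flat ℚ (nonZeroDivisors ℤ)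

/-- The rational rank of an abelian group. -/
noncomputable def rank' (M : Type*) [AddCommGroup M] : Cardinal :=
  Module.rank ℚ (ℚ ⊗[ℤ] M)

theorem rank'_congr {M N : Type u} [AddCommGroup M] [AddCommGroup N] (e : M ≃+ N) :
    rank' M = rank' N :=
  (e.toIntLinearEquiv.baseChange ℤ ℚ _ _).rank_eq

theorem rank'_eq_zero_of_finite (M : Type*) [AddCommGroup M] [Finite M] : rank' M = 0 := by
  have key : ∀ x : ℚ ⊗[ℤ] M, x = 0 := by
    intro x
    induction x using TensorProduct.induction_on with
    | zero => rfl
    | tmul q m =>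
      have hn : (0 : ℕ) < Nat.card M := Nat.card_pos
      have hm : (Nat.card M : ℤ) • m = 0 := by
        have := card_nsmul_eq_zero' (x := m)
        simpa using this
      have h1 : ((Nat.card M : ℚ)) • (q ⊗ₜ[ℤ] m) = 0 := by
        have : ((Nat.card M : ℤ) : ℚ) • (q ⊗ₜ[ℤ] m) = 0 := by
          rw [Int.cast_smul_eq_zsmul, ← TensorProduct.tmul_smul, hm, TensorProduct.tmul_zero]
        exact_mod_cast this
      have hne : ((Nat.card M : ℚ)) ≠ 0 := Nat.cast_ne_zero.mpr hn.ne'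
      calc q ⊗ₜ[ℤ] m = ((Nat.card M : ℚ))⁻¹ • (((Nat.card M : ℚ)) • q ⊗ₜ[ℤ] m) := by
            rw [smul_smul, inv_mul_cancel₀ hne, one_smul]
        _ = 0 := by rw [h1, smul_zero]
    | add x y hx hy => rw [hx, hy, add_zero]
  have : Subsingleton (ℚ ⊗[ℤ] M) := ⟨fun a b => by rw [key a, key b]⟩
  exact rank_subsingleton' ℚ _

theorem rank'_le_of_injective {M N : Type u} [AddCommGroup M] [AddCommGroup N] (f : M →+ N)
    (hf : Function.Injective f) : rank' M ≤ rank' N := by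
  have h : Function.Injective (f.toIntLinearMap.lTensor ℚ) :=
    Module.Flat.lTensor_preserves_injective_linearMap (M := ℚ) f.toIntLinearMap hf
  have h2 : Function.Injective (f.toIntLinearMap.baseChange ℚ) := by
    rw [LinearMap.baseChange_eq_ltensor]; exact h
  exact LinearMap.rank_le_of_injective _ h2

theorem rank'_eq_add {M N : Type u} [AddCommGroup M] [AddCommGroup N] (f : M →+ N)
    (hf : Function.Surjective f) :
    rank' M = rank' (LinearMap.ker f.toIntLinearMap) + rank' N := by
  set fl := f.toIntLinearMap with hfl
  set K := LinearMap.ker fl with hK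
  have hexact : Function.Exact K.subtype fl := fl.exact_subtype_ker_map
  have hex2 : Function.Exact (K.subtype.lTensor ℚ) (fl.lTensor ℚ) :=
    lTensor_exact ℚ hexact hf
  set I := K.subtype.baseChange ℚ with hI
  set F := fl.baseChange ℚ with hF
  have hIc : ⇑I = ⇑(K.subtype.lTensor ℚ) := K.subtype.baseChange_eq_ltensor
  have hFc : ⇑F = ⇑(fl.lTensor ℚ) := fl.baseChange_eq_ltensor
  have hFsurj : Function.Surjective F := by
    rw [hFc]; exact LinearMap.lTensor_surjective ℚ hf
  have hIinj : Function.Injective I := by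
    rw [hIc]
    exact Module.Flat.lTensor_preserves_injective_linearMap K.subtype K.injective_subtype
  have hker : LinearMap.ker F = LinearMap.range I := by
    have : Function.Exact I F := by
      rw [Function.Exact]  -- maybe unfold; or use hIc hFc
      intro y
      have := hex2 y
      rw [hFc, hIc]
      simpa using this
    exact this.linearMap_ker_eq
  have h1 : Module.rank ℚ (LinearMap.range F) + Module.rank ℚ (LinearMap.ker F)
      = Module.rank ℚ (ℚ ⊗[ℤ] M) := F.rank_range_add_rank_ker
  have h2 : Module.rank ℚ (LinearMap.range F) = Module.rank ℚ (ℚ ⊗[ℤ] N) := by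
    rw [LinearMap.range_eq_top.mpr hFsurj]
    exact (Submodule.topEquiv).rank_eq
  have h3 : Module.rank ℚ (LinearMap.ker F) = Module.rank ℚ (ℚ ⊗[ℤ] ↥K) := by
    rw [hker]
    exact ((LinearEquiv.ofInjective I hIinj).rank_eq).symm
  show Module.rank ℚ (ℚ ⊗[ℤ] M) = Module.rank ℚ (ℚ ⊗[ℤ] ↥K) + Module.rank ℚ (ℚ ⊗[ℤ] N)
  rw [← h1, h2, h3, add_comm]

section GroupLemmas

variable {G : Type u} [Group G]

theorem isComm_of_le {A B : Subgroup G} (hB : IsMulCommutative B) (h : A ≤ B) :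
    IsMulCommutative A := by
  haveI := hB
  exact ⟨⟨fun x y => Subtype.ext
    (Subgroup.mul_comm_of_mem_isMulCommutative B (h x.2) (h y.2))⟩⟩

theorem subgroupRank_eq_rank' (A : Subgroup G) [IsMulCommutative A] :
    subgroupRank A = rank' (Additive A) :=
  rank'_congr (MulEquiv.toAdditive ((Abelianization.equivOfComm (H := ↥A)).symm))

theorem subgroupRank_le_of_le {A B : Subgroup G} [IsMulCommutative A] [IsMulCommutative B]
    (h : A ≤ B) : subgroupRank A ≤ subgroupRank B := by
  rw [subgroupRank_eq_rank' A, subgroupRank_eq_rank' B]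
  refine rank'_le_of_injective (MonoidHom.toAdditive (Subgroup.inclusion h)) ?_
  intro a b hab
  exact Subgroup.inclusion_injective h hab

theorem grank_eq_add {H N : Type u} [CommGroup H] [CommGroup N] (φ : H →* N)
    (hφ : Function.Surjective φ) :
    rank' (Additive H) = rank' (Additive ↥φ.ker) + rank' (Additive N) := by
  have key := rank'_eq_add (MonoidHom.toAdditive φ) hφ
  have e : ↥(LinearMap.ker (MonoidHom.toAdditive φ).toIntLinearMap) ≃+ Additive ↥φ.ker :=
        { toFun := fun x => Additive.ofMul (⟨Additive.toMul x.1, x.2⟩ : ↥φ.ker),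
          invFun := fun y => ⟨Additive.ofMul ((Additive.toMul y : ↥φ.ker) : H),
            (Additive.toMul y : ↥φ.ker).2⟩,
          left_inv := fun x => rfl, right_inv := fun y => rfl,
          map_add' := fun x y => rfl }
  rw [key, rank'_congr e]

theorem subgroupRank_lt_aleph0_of_fg (A : Subgroup G) (hc : IsMulCommutative A) (hfg : A.FG) :
    subgroupRank A < Cardinal.aleph0 := by
  haveI := hc
  rw [subgroupRank_eq_rank' A]
  haveI : Group.FG ↥A := (Group.fg_iff_subgroup_fg A).mpr hfg
  haveI : Module.Finite ℤ (Additive ↥A) :=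
    Module.Finite.iff_addGroup_fg.mpr ⟨AddGroup.FG.out⟩
  exact Module.rank_lt_aleph0 ℚ _

theorem subgroupRank_eq_of_relIndex {A' A : Subgroup G} (hA : IsMulCommutative A) (h : A' ≤ A)
    (hrel : A'.relIndex A ≠ 0) : subgroupRank A' = subgroupRank A := by
  haveI := hA
  haveI hA'c : IsMulCommutative A' := isComm_of_le hA h
  set K := A'.subgroupOf A with hK
  haveI : K.FiniteIndex := ⟨hrel⟩
  haveI : Finite (↥A ⧸ K) := Subgroup.finite_quotient_of_finiteIndex (H := K)
  have key := grank_eq_add (QuotientGroup.mk' K) (QuotientGroup.mk'_surjective K)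
  rw [QuotientGroup.ker_mk'] at key
  have h0 : rank' (Additive (↥A ⧸ K)) = 0 := rank'_eq_zero_of_finite _
  rw [h0, add_zero] at key
  rw [subgroupRank_eq_rank' A, subgroupRank_eq_rank' A', key]
  exact (rank'_congr (MulEquiv.toAdditive (Subgroup.subgroupOfEquivOfLe h))).symm

theorem subgroupRank_split {G' : Type u} [Group G'] (f : G →* G') (D : Subgroup G)
    (hD : IsMulCommutative D) :
    subgroupRank D = subgroupRank (f.ker ⊓ D) + subgroupRank (D.map f) := by
  haveI := hD
  haveI : IsMulCommutative ↥(f.ker ⊓ D) := isComm_of_le hD inf_le_right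
  have key := grank_eq_add (f.subgroupMap D) (f.subgroupMap_surjective D)
  rw [subgroupRank_eq_rank' D, subgroupRank_eq_rank' (D.map f),
    subgroupRank_eq_rank' (f.ker ⊓ D), key]
  congr 1
  refine rank'_congr (MulEquiv.toAdditive ?_)
  refine { toFun := fun x => ⟨(x : ↥D), ?_, (x : ↥D).2⟩,
           invFun := fun y => ⟨⟨(y : G), y.2.2⟩, ?_⟩,
           left_inv := fun x => rfl, right_inv := fun y => rfl,
           map_mul' := fun x y => rfl }
  · exact MonoidHom.mem_ker.mpr (congrArg Subtype.val (MonoidHom.mem_ker.mp x.2))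
  · exact MonoidHom.mem_ker.mpr (Subtype.ext (MonoidHom.mem_ker.mp y.2.1))

theorem card_add_lt {a b c d : Cardinal} (hab : a ≤ b) (hcd : c < d) (hb : b < Cardinal.aleph0)
    (hd : d < Cardinal.aleph0) : a + c < b + d := by
  obtain ⟨b, rfl⟩ := Cardinal.lt_aleph0.mp hb
  obtain ⟨d, rfl⟩ := Cardinal.lt_aleph0.mp hd
  obtain ⟨a, rfl⟩ := Cardinal.lt_aleph0.mp (hab.trans_lt hb)
  obtain ⟨c, rfl⟩ := Cardinal.lt_aleph0.mp (hcd.trans hd)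
  have h1 : a ≤ b := by exact_mod_cast hab
  have h2 : c < d := by exact_mod_cast hcd
  have : a + c < b + d := by omega
  exact_mod_cast this

theorem isCommutative_of_forall_commute {S : Set G}
    (hS : ∀ x ∈ S, ∀ y ∈ S, x * y = y * x) : IsMulCommutative (Subgroup.closure S) := by
  constructor
  constructor
  intro x y
  refine Subtype.ext ?_
  have hx := x.2
  have hy := y.2
  refine Subgroup.closure_induction₂
    (p := fun a b _ _ => a * b = b * a) ?_ ?_ ?_ ?_ ?_ ?_ ?_ hx hy
  · exact fun a b ha hb => hS a ha b hb
  · intro a _; rw [one_mul, mul_one]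
  · intro a _; rw [one_mul, mul_one]
  · intro a b c _ _ _ h1 h2
    rw [mul_assoc, h2, ← mul_assoc, h1, mul_assoc]
  · intro a b c _ _ _ h1 h2
    rw [← mul_assoc, h1, mul_assoc, h2, ← mul_assoc]
  · intro a b _ _ h
    exact (Commute.inv_left h).eq
  · intro a b _ _ h
    exact (Commute.inv_right h).eq

end GroupLemmas

section Pi

theorem subgroupRank_lt_aleph0_pi {n : ℕ} (G : Fin n → Type u) [∀ i, Group (G i)]
    (hab : ∀ i, ∀ A : Subgroup (G i), IsMulCommutative A → A.FG)
    (D : Subgroup (∀ i, G i)) (hD : IsMulCommutative D) : subgroupRank D < Cardinal.aleph0 := by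
  haveI := hD
  rw [subgroupRank_eq_rank' D]
  haveI : ∀ i, Module.Finite ℤ (Additive ↥(D.map (Pi.evalMonoidHom G i))) := by
    intro i
    haveI : Group.FG ↥(D.map (Pi.evalMonoidHom G i)) :=
      (Group.fg_iff_subgroup_fg _).mpr (hab i _ inferInstance)
    exact Module.Finite.iff_addGroup_fg.mpr ⟨AddGroup.FG.out⟩
  let φ : Additive ↥D →+ (∀ i, Additive ↥(D.map (Pi.evalMonoidHom G i))) :=
    { toFun := fun x => fun i => Additive.ofMul
        (⟨((Additive.toMul x : ↥D) : ∀ j, G j) i,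
          ⟨((Additive.toMul x : ↥D) : ∀ j, G j), (Additive.toMul x : ↥D).2, rfl⟩⟩ :
          ↥(D.map (Pi.evalMonoidHom G i))),
      map_zero' := rfl,
      map_add' := fun x y => rfl }
  have hinj : Function.Injective φ := by
    intro x y hxy
    have h2 : ∀ i, ((Additive.toMul x : ↥D) : ∀ j, G j) i
        = ((Additive.toMul y : ↥D) : ∀ j, G j) i :=
      fun i => congrArg Subtype.val (congrFun hxy i)
    exact Subtype.ext (funext h2)
  exact lt_of_le_of_lt (rank'_le_of_injective φ hinj) (Module.rank_lt_aleph0 ℚ _)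

end Pi

end IHAAux

open IHAAux in
/-- If `A` is a highest abelian subgroup of `G = G₁ × … × Gₙ` (all abelian subgroups of
the `Gᵢ` being finitely generated), then each projection `pᵢ(A)` is a highest abelian
subgroup of `Gᵢ`. -/
theorem isHighestAbelian_map_eval {n : ℕ} (G : Fin n → Type*) [∀ i, Group (G i)]
    (hab : ∀ i, ∀ A : Subgroup (G i), IsMulCommutative A → A.FG)
    (A : Subgroup (∀ i, G i)) (hA : IsHighestAbelian A) (i : Fin n) :
    IsHighestAbelian (A.map (Pi.evalMonoidHom G i)) := by
  obtain ⟨hAc, hAmax⟩ := hA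
  haveI := hAc
  set p := Pi.evalMonoidHom G i with hp
  constructor
  · infer_instance
  intro B C hBle hBrel hCc hBC hlt
  haveI := hCc
  set A' := B.comap p ⊓ A with hA'def
  have hA'le : A' ≤ A := inf_le_right
  have hA'c : IsMulCommutative A' := isComm_of_le hAc hA'le
  haveI := hA'c
  have hrel : A'.relIndex A ≠ 0 := by
    rw [hA'def, Subgroup.inf_relIndex_right, Subgroup.relIndex_comap]
    exact hBrel
  set ι := MonoidHom.mulSingle G i with hι
  set S : Set (∀ j, G j) := ↑A' ∪ ↑(C.map ι) with hS
  have hcomm : ∀ x ∈ S, ∀ y ∈ S, x * y = y * x := by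
    have key : ∀ x ∈ A', ∀ c ∈ C, x * ι c = ι c * x := by
      intro x hx c hc
      funext j
      show x j * (ι c) j = (ι c) j * x j
      by_cases hj : j = i
      · subst hj
        have hxj : x j ∈ B := hx.1
        have hs : (ι c) j = c := Pi.mulSingle_eq_same j c
        rw [hs]
        exact Subgroup.mul_comm_of_mem_isMulCommutative C (hBC hxj) hc
      · have hs : (ι c) j = 1 := Pi.mulSingle_eq_of_ne hj c
        rw [hs, one_mul, mul_one]
    rintro x (hx | hx) y (hy | hy)
    · exact Subgroup.mul_comm_of_mem_isMulCommutative A' hx hy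
    · obtain ⟨c, hc, rfl⟩ := hy; exact key x hx c hc
    · obtain ⟨c, hc, rfl⟩ := hx; exact (key y hy c hc).symm
    · exact Subgroup.mul_comm_of_mem_isMulCommutative (C.map ι) hx hy
  set C' := A' ⊔ C.map ι with hC'def
  have hC'c : IsMulCommutative C' := by
    rw [hC'def, Subgroup.sup_eq_closure]
    exact isCommutative_of_forall_commute hcomm
  haveI := hC'c
  have hkerA'c : IsMulCommutative ↥((p.ker ⊓ A')) := isComm_of_le hA'c inf_le_right
  have hkerC'c : IsMulCommutative ↥((p.ker ⊓ C')) := isComm_of_le hC'c inf_le_right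
  haveI := hkerA'c; haveI := hkerC'c
  have e1 : subgroupRank A' = subgroupRank A := subgroupRank_eq_of_relIndex hAc hA'le hrel
  have sA : subgroupRank A' = subgroupRank (p.ker ⊓ A') + subgroupRank (A'.map p) :=
    subgroupRank_split p A' hA'c
  have sC : subgroupRank C' = subgroupRank (p.ker ⊓ C') + subgroupRank (C'.map p) :=
    subgroupRank_split p C' hC'c
  have m1 : subgroupRank (A'.map p) ≤ subgroupRank (A.map p) :=
    subgroupRank_le_of_le (Subgroup.map_mono hA'le)
  have m2 : subgroupRank (p.ker ⊓ A') ≤ subgroupRank (p.ker ⊓ C') :=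
    subgroupRank_le_of_le (inf_le_inf_left _ le_sup_left)
  have m3 : subgroupRank C ≤ subgroupRank (C'.map p) := by
    refine subgroupRank_le_of_le ?_
    intro c hc
    exact ⟨ι c, Subgroup.mem_sup_right ⟨c, hc, rfl⟩, Pi.mulSingle_eq_same i c⟩
  have f2 : subgroupRank (C'.map p) < Cardinal.aleph0 :=
    subgroupRank_lt_aleph0_of_fg _ inferInstance (hab i _ inferInstance)
  have f3 : subgroupRank (p.ker ⊓ C') < Cardinal.aleph0 :=
    subgroupRank_lt_aleph0_pi G hab _ hkerC'c
  refine hAmax A' C' hA'le hrel hC'c le_sup_left ?_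
  rw [← e1, sA, sC]
  exact card_add_lt m2 (m1.trans_lt (hlt.trans_le m3)) f3 f2
end

section
/- Let G be a group, let g be an element of the center of G of infinite order, and let A₁, …, A_k be finitely many highest abelian subgroups of G, each finitely generated. Then some power gⁿ with n ≥ 1 lies in the intersection A₁ ∩ … ∩ A_k; in particular this intersection is nontrivial. -/
open scoped TensorProduct

open scoped IsMulCommutative

/-- Upgrade a `ℤ`-linear equivalence between `ℚ`-vector spaces to a
`ℚ`-linear equivalence. -/
def intToRatLinearEquiv {M N : Type*} [AddCommGroup M] [AddCommGroup N]
    [Module ℚ M] [Module ℚ N] (e : M ≃ₗ[ℤ] N) : M ≃ₗ[ℚ] N :=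
  { e with map_smul' := fun q x => map_rat_smul e.toLinearMap.toAddMonoidHom q x }

/-- Tensoring with `ℚ` respects additive equivalences, `ℚ`-linearly. -/
noncomputable def ratTensorCongr {M N : Type*} [AddCommGroup M] [AddCommGroup N]
    (e : M ≃+ N) : (ℚ ⊗[ℤ] M) ≃ₗ[ℚ] (ℚ ⊗[ℤ] N) :=
  TensorProduct.AlgebraTensorModule.congr (LinearEquiv.refl ℚ ℚ) e.toIntLinearEquiv

lemma rank_ratTensor_prod_int {M : Type*} [AddCommGroup M] :
    Module.rank ℚ (ℚ ⊗[ℤ] (M × ℤ)) = Module.rank ℚ (ℚ ⊗[ℤ] M) + 1 := by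
  have e1 : (ℚ ⊗[ℤ] (M × ℤ)) ≃ₗ[ℚ] (ℚ ⊗[ℤ] M) × (ℚ ⊗[ℤ] ℤ) :=
    intToRatLinearEquiv (TensorProduct.prodRight ℤ ℤ ℚ M ℤ)
  have e2 : (ℚ ⊗[ℤ] ℤ) ≃ₗ[ℚ] ℚ := TensorProduct.AlgebraTensorModule.rid ℤ ℚ ℚ
  rw [e1.rank_eq, rank_prod, e2.rank_eq, Module.rank_self]
  simp

lemma subgroupRank_eq_rank {G : Type*} [Group G] (H : Subgroup G)
    (h : IsMulCommutative H) :
    subgroupRank H = Module.rank ℚ (ℚ ⊗[ℤ] Additive H) := by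
  haveI := h
  exact (ratTensorCongr
    (MulEquiv.toAdditive (Abelianization.equivOfComm (H := ↥H)))).symm.rank_eq

lemma subgroupRank_lt_aleph0 {G : Type*} [Group G] (H : Subgroup G)
    (hc : IsMulCommutative H) (hfg : H.FG) : subgroupRank H < Cardinal.aleph0 := by
  haveI := hc
  haveI : Group.FG H := (Group.fg_iff_subgroup_fg H).mpr hfg
  haveI : Module.Finite ℤ (Additive ↥H) :=
    Module.Finite.iff_addGroup_fg.mpr inferInstance
  rw [subgroupRank_eq_rank H hc]
  exact Module.rank_lt_aleph0 ℚ _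

lemma exists_pow_mem_of_isHighestAbelian {G : Type*} [Group G] (g : G)
    (hg : g ∈ Subgroup.center G) (hord : ¬ IsOfFinOrder g)
    (H : Subgroup G) (hH : IsHighestAbelian H) (hfg : H.FG) :
    ∃ n : ℕ, 1 ≤ n ∧ g ^ n ∈ H := by
  by_contra hcon
  push_neg at hcon
  haveI := hH.1
  have hcent : ∀ (m : ℤ) (z : G), z * g ^ m = g ^ m * z := fun m z =>
    (Subgroup.mem_center_iff.mp (Subgroup.zpow_mem _ hg m) z)
  have hzpow : ∀ m : ℤ, m ≠ 0 → g ^ m ∉ H := by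
    intro m hm hmem
    rcases lt_or_gt_of_ne hm with h | h
    · refine hcon ((-m).toNat) (by omega) ?_
      have he : g ^ ((-m).toNat) = g ^ (-m) := by
        rw [← zpow_natCast, Int.toNat_of_nonneg (by omega)]
      rw [he, zpow_neg]
      exact H.inv_mem hmem
    · refine hcon (m.toNat) (by omega) ?_
      have he : g ^ (m.toNat) = g ^ m := by
        rw [← zpow_natCast, Int.toNat_of_nonneg (by omega)]
      rw [he]
      exact hmem
  -- the homomorphism (a, n) ↦ a * g ^ n
  let ψ : ↥H × Multiplicative ℤ →* G :=
    { toFun := fun p => (p.1 : G) * g ^ (Multiplicative.toAdd p.2)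
      map_one' := by simp
      map_mul' := by
        rintro ⟨a, x⟩ ⟨b, y⟩
        simp only [Prod.fst_mul, Prod.snd_mul, Subgroup.coe_mul, toAdd_mul]
        rw [zpow_add, ← mul_assoc, mul_assoc ((a : G)) (b : G),
          hcent (Multiplicative.toAdd x) (b : G), ← mul_assoc, mul_assoc] }
  have hinj : Function.Injective ψ := by
    rw [injective_iff_map_eq_one]
    rintro ⟨a, x⟩ hx
    have hψ : (a : G) * g ^ (Multiplicative.toAdd x) = 1 := hx
    have hmem : g ^ (Multiplicative.toAdd x) ∈ H := by
      have : g ^ (Multiplicative.toAdd x) = (a : G)⁻¹ := by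
        rw [eq_inv_iff_mul_eq_one, ← hcent, hψ]
      rw [this]
      exact H.inv_mem a.2
    have hx0 : Multiplicative.toAdd x = 0 := by
      by_contra h0
      exact hzpow _ h0 hmem
    have ha : (a : G) = 1 := by
      have := hψ
      rw [hx0, zpow_zero, mul_one] at this
      exact this
    refine Prod.ext (Subtype.ext ha) ?_
    exact Multiplicative.toAdd.injective (by simpa using hx0)
  have hcommR : IsMulCommutative (ψ.range) := by
    constructor
    constructor
    rintro ⟨x, hx⟩ ⟨y, hy⟩
    obtain ⟨p, rfl⟩ := hx
    obtain ⟨q, rfl⟩ := hy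
    apply Subtype.ext
    show ψ p * ψ q = ψ q * ψ p
    rw [← map_mul, ← map_mul, mul_comm]
  have hle : H ≤ ψ.range := by
    intro a ha
    exact ⟨(⟨a, ha⟩, 1), by simp [ψ]⟩
  -- compute the rank of the range
  have e : ↥ψ.range ≃* ↥H × Multiplicative ℤ :=
    (MulEquiv.ofBijective ψ.rangeRestrict
      ⟨MonoidHom.rangeRestrict_injective_iff.mpr hinj,
        MonoidHom.rangeRestrict_surjective ψ⟩).symm
  have eAdd : Additive ↥ψ.range ≃+ (Additive ↥H × ℤ) :=
    (MulEquiv.toAdditive e).trans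
      ((AddEquiv.prodAdditive (G := ↥H) (H := Multiplicative ℤ)).trans
        (AddEquiv.prodCongr (AddEquiv.refl _) (AddEquiv.additiveMultiplicative ℤ)))
  have hrank : subgroupRank ψ.range = subgroupRank H + 1 := by
    rw [subgroupRank_eq_rank _ hcommR, subgroupRank_eq_rank _ hH.1,
      (ratTensorCongr eAdd).rank_eq]
    exact rank_ratTensor_prod_int
  have hlt : subgroupRank H < subgroupRank ψ.range := by
    rw [hrank]
    obtain ⟨n, hn⟩ := Cardinal.lt_aleph0.mp (subgroupRank_lt_aleph0 H hH.1 hfg)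
    rw [hn]
    exact_mod_cast Nat.lt_succ_self n
  exact hH.2 H ψ.range le_rfl (by simp [Subgroup.relIndex_self]) hcommR hle hlt

/-- If `g` is a central element of infinite order and `A₁, …, A_k` are finitely many
finitely generated highest abelian subgroups, then some power `gⁿ` with `n ≥ 1` lies in
`A₁ ∩ … ∩ A_k`; in particular this intersection is nontrivial. -/
theorem exists_pow_mem_iInf_of_isHighestAbelian {G : Type*} [Group G] (g : G)
    (hg : g ∈ Subgroup.center G) (hord : ¬ IsOfFinOrder g)
    {k : ℕ} (A : Fin k → Subgroup G) (hA : ∀ i, IsHighestAbelian (A i))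
    (hfg : ∀ i, (A i).FG) :
    (∃ n : ℕ, 1 ≤ n ∧ g ^ n ∈ ⨅ i, A i) ∧ (⨅ i, A i) ≠ ⊥ := by
  choose m hm1 hmm using fun i =>
    exists_pow_mem_of_isHighestAbelian g hg hord (A i) (hA i) (hfg i)
  set n : ℕ := ∏ i, m i with hn
  have hn1 : 1 ≤ n := Nat.one_le_iff_ne_zero.mpr <| by
    rw [hn]
    exact Finset.prod_ne_zero_iff.mpr fun i _ => Nat.one_le_iff_ne_zero.mp (hm1 i)
  have hmem : g ^ n ∈ ⨅ i, A i := by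
    rw [Subgroup.mem_iInf]
    intro i
    obtain ⟨c, hc⟩ := Finset.dvd_prod_of_mem m (Finset.mem_univ i)
    rw [hn, hc, pow_mul]
    exact Subgroup.pow_mem _ (hmm i) c
  refine ⟨⟨n, hn1, hmem⟩, fun hbot => hord ?_⟩
  rw [hbot, Subgroup.mem_bot] at hmem
  exact isOfFinOrder_iff_pow_eq_one.mpr ⟨n, hn1, hmem⟩
end

section
/- Let G be a group in which every abelian subgroup is finitely generated. If G has the Abelian intersection property (AIP), then every element of the center of G has finite order. -/
open scoped TensorProduct

open scoped IsMulCommutative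

section QRank

instance inst_s6 : Module.Flat ℤ ℚ := IsLocalization.flat ℚ (nonZeroDivisors ℤ)

universe u
variable {M N : Type u} [AddCommGroup M] [AddCommGroup N]

/-- rank of ℚ ⊗ M -/
noncomputable def qrank (M : Type*) [AddCommGroup M] : Cardinal :=
  Module.rank ℚ (ℚ ⊗[ℤ] M)

lemma qrank_eq_of_addEquiv (e : M ≃+ N) : qrank M = qrank N :=
  LinearEquiv.rank_eq (e.toIntLinearEquiv.baseChange ℤ ℚ M N)

lemma qrank_le_of_injective (f : M →+ N) (hf : Function.Injective f) :
    qrank M ≤ qrank N := by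
  have h : Function.Injective (LinearMap.baseChange ℚ f.toIntLinearMap) := by
    rw [LinearMap.baseChange_eq_ltensor]
    exact Module.Flat.lTensor_preserves_injective_linearMap f.toIntLinearMap hf
  exact LinearMap.rank_le_of_injective _ h

/-- AddEquiv between ℚ-vector spaces preserves rank. -/
lemma rank_eq_of_addEquiv {V W : Type u} [AddCommGroup V] [AddCommGroup W]
    [Module ℚ V] [Module ℚ W] (e : V ≃+ W) : Module.rank ℚ V = Module.rank ℚ W := by
  have e' : V ≃ₗ[ℚ] W :=
    LinearEquiv.ofBijective e.toAddMonoidHom.toRatLinearMap e.bijective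
  exact e'.rank_eq

lemma qrank_prod_int : qrank (M × ℤ) = qrank M + 1 := by
  have e : (ℚ ⊗[ℤ] (M × ℤ)) ≃+ (ℚ ⊗[ℤ] M) × ℚ :=
    (TensorProduct.prodRight ℤ ℚ ℚ M ℤ).toAddEquiv.trans
      (AddEquiv.prodCongr (AddEquiv.refl _)
        (TensorProduct.AlgebraTensorModule.rid ℤ ℚ ℚ).toAddEquiv)
  have := rank_eq_of_addEquiv e
  rw [qrank, this, rank_prod, Module.rank_self]
  simp [qrank]

lemma qrank_lt_aleph0 (hM : Module.Finite ℤ M) : qrank M < Cardinal.aleph0 := by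
  haveI := hM
  haveI : Module.Finite ℚ (ℚ ⊗[ℤ] M) := Module.Finite.base_change ℤ ℚ M
  exact Module.rank_lt_aleph0 ℚ (ℚ ⊗[ℤ] M)

lemma qrank_lt_of_inj (hM : Module.Finite ℤ M) (f : M × ℤ →+ N)
    (hf : Function.Injective f) : qrank M < qrank N := by
  have h1 : qrank (M × ℤ) ≤ qrank N := qrank_le_of_injective f hf
  rw [qrank_prod_int] at h1
  refine lt_of_lt_of_le ?_ h1
  obtain ⟨n, hn⟩ := Cardinal.lt_aleph0.mp (qrank_lt_aleph0 hM)
  rw [hn]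
  norm_cast
  omega

end QRank

section SubgroupRankLemmas

variable {G : Type*} [Group G]

lemma subgroupRank_eq_qrank (A : Subgroup G) (hA : IsMulCommutative A) :
    subgroupRank A = qrank (Additive A) := by
  haveI := hA
  exact (qrank_eq_of_addEquiv
    (MulEquiv.toAdditive (Abelianization.equivOfComm (H := A))).symm)

end SubgroupRankLemmas

/-- If every abelian subgroup of `G` is finitely generated and `G` has AIP, then
every central element of `G` has finite order. -/
theorem center_torsion_of_hasAIP {G : Type*} [Group G]
    (hab : ∀ A : Subgroup G, IsMulCommutative A → A.FG)
    (h : HasAIP G) :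
    ∀ g ∈ Subgroup.center G, IsOfFinOrder g := by
  intro g hg
  obtain ⟨k, A, hhigh, hinf⟩ := h
  -- main claim
  have claim : ∀ i, ∃ n : ℕ, 0 < n ∧ g ^ n ∈ A i := by
    intro i
    by_contra hcon
    push_neg at hcon
    have hpow : ∀ m : ℤ, g ^ m ∈ A i → m = 0 := by
      intro m hm
      by_contra hm0
      refine hcon m.natAbs (by omega) ?_
      rcases Int.natAbs_eq m with he | he
      · rw [← zpow_natCast, ← he]; exact hm
      · rw [← zpow_natCast]
        have : (g ^ (m.natAbs : ℤ)) = (g ^ m)⁻¹ := by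
          rw [← zpow_neg]; congr 1; omega
        rw [this]; exact (A i).inv_mem hm
    haveI hAc := (hhigh i).1
    -- g^n commutes with everything
    have hgc : ∀ (n : ℤ) (x : G), g ^ n * x = x * g ^ n := by
      intro n x
      have : g ^ n ∈ Subgroup.center G := zpow_mem hg n
      exact (Subgroup.mem_center_iff.mp this x).symm
    have hcomm : ∀ n m : ℤ, g ^ n * g ^ m = g ^ m * g ^ n := by
      intro n m; rw [← zpow_add, ← zpow_add, add_comm]
    -- the subgroup C = A i * <g>
    set C : Subgroup G :=
      { carrier := {x | ∃ a ∈ A i, ∃ n : ℤ, x = a * g ^ n}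
        one_mem' := ⟨1, (A i).one_mem, 0, by simp⟩
        mul_mem' := by
          rintro x y ⟨a, ha, n, rfl⟩ ⟨b, hb, m, rfl⟩
          refine ⟨a * b, (A i).mul_mem ha hb, n + m, ?_⟩
          rw [zpow_add]
          calc a * g ^ n * (b * g ^ m) = a * (g ^ n * b) * g ^ m := by group
            _ = a * (b * g ^ n) * g ^ m := by rw [hgc]
            _ = a * b * (g ^ n * g ^ m) := by group
        inv_mem' := by
          rintro x ⟨a, ha, n, rfl⟩
          refine ⟨a⁻¹, (A i).inv_mem ha, -n, ?_⟩
          rw [mul_inv_rev, ← hgc, zpow_neg] } with hC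
    have hmemC : ∀ (a : G), a ∈ A i → ∀ n : ℤ, a * g ^ n ∈ C := by
      intro a ha n; exact ⟨a, ha, n, rfl⟩
    have hAleC : A i ≤ C := by
      intro a ha
      have := hmemC a ha 0
      simpa using this
    have hCcomm : IsMulCommutative C := by
      constructor; constructor
      rintro ⟨x, a, ha, n, rfl⟩ ⟨y, b, hb, m, rfl⟩
      ext
      show (a * g ^ n) * (b * g ^ m) = (b * g ^ m) * (a * g ^ n)
      have hab' : a * b = b * a := by
        have := hAc.is_comm.comm ⟨a, ha⟩ ⟨b, hb⟩
        exact congrArg Subtype.val this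
      calc (a * g ^ n) * (b * g ^ m) = a * (g ^ n * b) * g ^ m := by group
        _ = a * (b * g ^ n) * g ^ m := by rw [hgc]
        _ = (a * b) * (g ^ n * g ^ m) := by group
        _ = (b * a) * (g ^ m * g ^ n) := by rw [hab', hcomm]
        _ = b * (a * g ^ m) * g ^ n := by group
        _ = b * (g ^ m * a) * g ^ n := by rw [← hgc m a]
        _ = (b * g ^ m) * (a * g ^ n) := by group
    -- the injective additive map
    haveI := hAc
    haveI := hCcomm
    let f : (Additive (A i)) × ℤ →+ Additive C :=
      { toFun := fun p =>
          Additive.ofMul (⟨((Additive.toMul p.1 : A i) : G) * g ^ p.2,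
            hmemC _ (Additive.toMul p.1 : A i).2 p.2⟩ : C)
        map_zero' := by
          apply congrArg (fun z : C => Additive.ofMul z)
          apply Subtype.ext
          show ((Additive.toMul (0 : Additive (A i)) : A i) : G) * g ^ (0:ℤ) = 1
          simp
        map_add' := by
          rintro ⟨x, n⟩ ⟨y, m⟩
          apply congrArg (fun z : C => Additive.ofMul z)
          apply Subtype.ext
          show ((Additive.toMul x : A i) : G) * (Additive.toMul y : A i) * g ^ (n + m)
            = ((Additive.toMul x : A i) : G) * g ^ n * (((Additive.toMul y : A i) : G) * g ^ m)
          rw [zpow_add]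
          calc ((Additive.toMul x : A i) : G) * (Additive.toMul y : A i) * (g ^ n * g ^ m)
              = ((Additive.toMul x : A i) : G) * (((Additive.toMul y : A i) : G) * g ^ n) * g ^ m := by
                group
            _ = ((Additive.toMul x : A i) : G) * (g ^ n * (Additive.toMul y : A i)) * g ^ m := by
                rw [hgc]
            _ = ((Additive.toMul x : A i) : G) * g ^ n * (((Additive.toMul y : A i) : G) * g ^ m) := by
                group }
    have hfinj : Function.Injective f := by
      rintro ⟨x, n⟩ ⟨y, m⟩ hxy
      have hxy' : ((Additive.toMul x : A i) : G) * g ^ n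
          = ((Additive.toMul y : A i) : G) * g ^ m :=
        congrArg (fun z : Additive C => ((Additive.toMul z : C) : G)) hxy
      have hnm : n = m := by
        have hmem : g ^ (n - m) ∈ A i := by
          have : g ^ (n - m) = ((Additive.toMul x : A i) : G)⁻¹ * (Additive.toMul y : A i) := by
            calc g ^ (n - m) = ((Additive.toMul x : A i) : G)⁻¹ *
                (((Additive.toMul x : A i) : G) * g ^ n) * (g ^ m)⁻¹ := by group
              _ = ((Additive.toMul x : A i) : G)⁻¹ *
                (((Additive.toMul y : A i) : G) * g ^ m) * (g ^ m)⁻¹ := by rw [hxy']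
              _ = ((Additive.toMul x : A i) : G)⁻¹ * (Additive.toMul y : A i) := by group
          rw [this]
          exact (A i).mul_mem ((A i).inv_mem (Additive.toMul x : A i).2)
            (Additive.toMul y : A i).2
        have := hpow _ hmem
        omega
      subst hnm
      have h1 : ((Additive.toMul x : A i) : G) = (Additive.toMul y : A i) :=
        mul_right_cancel hxy'
      have hx : x = y := Additive.toMul.injective (Subtype.ext h1)
      rw [hx]
    -- module finiteness
    have hAfg : (A i).FG := hab _ hAc
    haveI : Group.FG (A i) := (Group.fg_iff_subgroup_fg (A i)).mpr hAfg
    haveI : AddGroup.FG (Additive (A i)) := GroupFG.iff_add_fg.mp inferInstance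
    have hfin : Module.Finite ℤ (Additive (A i)) :=
      Module.Finite.iff_addGroup_fg.mpr inferInstance
    -- rank comparison
    have hlt : subgroupRank (A i) < subgroupRank C := by
      rw [subgroupRank_eq_qrank _ hAc, subgroupRank_eq_qrank _ hCcomm]
      exact qrank_lt_of_inj hfin f hfinj
    exact (hhigh i).2 (A i) C le_rfl (by simp [Subgroup.relIndex_self]) hCcomm hAleC hlt
  -- combine
  choose n hn hmem using claim
  rcases Nat.eq_zero_or_pos k with hk | hk
  · subst hk
    have : g ∈ (⊥ : Subgroup G) := by
      rw [← hinf]; exact Subgroup.mem_iInf.mpr (fun i => i.elim0)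
    rw [Subgroup.mem_bot] at this
    rw [this]; exact IsOfFinOrder.one
  · set N := ∏ i : Fin k, n i with hN
    have hNpos : 0 < N := Finset.prod_pos (fun i _ => hn i)
    have hgN : g ^ N ∈ ⨅ i, A i := by
      refine Subgroup.mem_iInf.mpr (fun i => ?_)
      have : n i ∣ N := Finset.dvd_prod_of_mem n (Finset.mem_univ i)
      obtain ⟨c, hc⟩ := this
      rw [hc, pow_mul]
      exact Subgroup.pow_mem _ (hmem i) c
    rw [hinf, Subgroup.mem_bot] at hgN
    exact isOfFinOrder_iff_pow_eq_one.mpr ⟨N, hNpos, hgN⟩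
end

section
/- In the group G, the subgroup generated by the images x̄ and ā is free abelian of rank 2, i.e. isomorphic to ℤ × ℤ. -/
/-- The six generators `x, y, a, b, s, t` of the presentation. -/
inductive Gen : Type
  | x | y | a | b | s | t
  deriving DecidableEq

namespace GapGroup

open FreeGroup
open scoped commutatorElement

/-- The relations `[x,a] = [x,b] = [y,a] = [y,b] = 1`, `s a s⁻¹ = [a,b]`,
`t b t⁻¹ = [a,b]`, written as words that must die in the quotient
(here `⁅u,v⁆ = u v u⁻¹ v⁻¹`). -/
def rels : Set (FreeGroup Gen) :=
  {⁅of Gen.x, of Gen.a⁆, ⁅of Gen.x, of Gen.b⁆, ⁅of Gen.y, of Gen.a⁆, ⁅of Gen.y, of Gen.b⁆,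
    of Gen.s * of Gen.a * (of Gen.s)⁻¹ * ⁅of Gen.a, of Gen.b⁆⁻¹,
    of Gen.t * of Gen.b * (of Gen.t)⁻¹ * ⁅of Gen.a, of Gen.b⁆⁻¹}

/-- The group `G = ⟨x, y, a, b, s, t ∣ [x,a] = [x,b] = [y,a] = [y,b] = 1,
s a s⁻¹ = [a,b] = t b t⁻¹⟩`. -/
abbrev G : Type := PresentedGroup rels

/-- The image `x̄` of the generator `x` in `G`. -/
def xbar : G := PresentedGroup.of Gen.x
/-- The image `ȳ` of the generator `y` in `G`. -/
def ybar : G := PresentedGroup.of Gen.y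
/-- The image `ā` of the generator `a` in `G`. -/
def abar : G := PresentedGroup.of Gen.a
/-- The image `b̄` of the generator `b` in `G`. -/
def bbar : G := PresentedGroup.of Gen.b

end GapGroup

namespace ZxZAux

open GapGroup
open scoped commutatorElement

abbrev M : Type := Matrix (Fin 3) (Fin 3) ℚ

def Au : Mˣ := ⟨!![1,1,0;0,1,1;0,0,1], !![1,-1,1;0,1,-1;0,0,1],
  by norm_num [Matrix.mul_fin_three, ← Matrix.one_fin_three],
  by norm_num [Matrix.mul_fin_three, ← Matrix.one_fin_three]⟩

def Bu : Mˣ := ⟨!![-1,-2,2;1,2,-1;0,1,2], !![5,6,-2;-2,-2,1;1,1,0],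
  by norm_num [Matrix.mul_fin_three, ← Matrix.one_fin_three],
  by norm_num [Matrix.mul_fin_three, ← Matrix.one_fin_three]⟩

def Su : Mˣ := ⟨!![0,1,0;0,0,1;-1,-1,0], !![-1,0,-1;1,0,0;0,1,0],
  by norm_num [Matrix.mul_fin_three, ← Matrix.one_fin_three],
  by norm_num [Matrix.mul_fin_three, ← Matrix.one_fin_three]⟩

def Tu : Mˣ := ⟨!![0,1,1;1,2,0;0,-1,-2], !![-4,1,-2;2,0,1;-1,0,-1],
  by norm_num [Matrix.mul_fin_three, ← Matrix.one_fin_three],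
  by norm_num [Matrix.mul_fin_three, ← Matrix.one_fin_three]⟩

lemma Srel : Su * Au * Su⁻¹ = Au * Bu * Au⁻¹ * Bu⁻¹ := by
  ext : 1
  show (Su : M) * Au * (Su⁻¹ : Mˣ) = (Au : M) * Bu * (Au⁻¹ : Mˣ) * (Bu⁻¹ : Mˣ)
  norm_num [Au, Bu, Su, Matrix.mul_fin_three]

lemma Trel : Tu * Bu * Tu⁻¹ = Au * Bu * Au⁻¹ * Bu⁻¹ := by
  ext : 1
  show (Tu : M) * Bu * (Tu⁻¹ : Mˣ) = (Au : M) * Bu * (Au⁻¹ : Mˣ) * (Bu⁻¹ : Mˣ)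
  norm_num [Au, Bu, Tu, Matrix.mul_fin_three]

/-- Target group for the homomorphism out of `G`. -/
abbrev H : Type := Mˣ × Multiplicative ℤ

def f : Gen → H
  | Gen.x => (1, Multiplicative.ofAdd 1)
  | Gen.y => 1
  | Gen.a => (Au, 1)
  | Gen.b => (Bu, 1)
  | Gen.s => (Su, 1)
  | Gen.t => (Tu, 1)

lemma hrels : ∀ r ∈ rels, FreeGroup.lift f r = 1 := by
  intro r hr
  simp only [rels, Set.mem_insert_iff, Set.mem_singleton_iff] at hr
  rcases hr with rfl | rfl | rfl | rfl | rfl | rfl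
  · simp [commutatorElement_def, f, Prod.ext_iff]
  · simp [commutatorElement_def, f, Prod.ext_iff]
  · simp [commutatorElement_def, f, Prod.ext_iff]
  · simp [commutatorElement_def, f, Prod.ext_iff]
  · simp only [commutatorElement_def, map_mul, map_inv, FreeGroup.lift_apply_of, f]
    rw [mul_inv_eq_one]
    exact Prod.ext (by simpa using Srel) (by simp)
  · simp only [commutatorElement_def, map_mul, map_inv, FreeGroup.lift_apply_of, f]
    rw [mul_inv_eq_one]
    exact Prod.ext (by simpa using Trel) (by simp)

/-- The homomorphism `G →* H`. -/
def φ : G →* H := PresentedGroup.toGroup hrels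

lemma φx : φ xbar = (1, Multiplicative.ofAdd 1) := PresentedGroup.toGroup.of hrels

lemma φa : φ abar = (Au, 1) := PresentedGroup.toGroup.of hrels

lemma commute_xa : Commute xbar abar := by
  have h : (PresentedGroup.mk rels) ⁅FreeGroup.of Gen.x, FreeGroup.of Gen.a⁆ = 1 := by
    refine (QuotientGroup.eq_one_iff _).mpr ?_
    exact Subgroup.subset_normalClosure (by simp [rels])
  have h2 : ⁅xbar, abar⁆ = 1 := by
    simp only [commutatorElement_def, map_mul, map_inv] at h ⊢
    exact h
  exact commutatorElement_eq_one_iff_commute.mp h2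

/-- The homomorphism `ℤ × ℤ →* G` hitting `closure {xbar, abar}`. -/
def χ : Multiplicative (ℤ × ℤ) →* G where
  toFun p := xbar ^ (Multiplicative.toAdd p).1 * abar ^ (Multiplicative.toAdd p).2
  map_one' := by simp
  map_mul' p q := by
    simp only [toAdd_mul, Prod.fst_add, Prod.snd_add, zpow_add]
    rw [(commute_xa.zpow_zpow _ _).mul_mul_mul_comm]

lemma χ_apply (p : Multiplicative (ℤ × ℤ)) :
    χ p = xbar ^ (Multiplicative.toAdd p).1 * abar ^ (Multiplicative.toAdd p).2 := rfl

lemma pow_A (n : ℕ) : ((Au : M)) ^ n = !![1,(n:ℚ),n*(n-1)/2;0,1,(n:ℚ);0,0,1] := by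
  induction n with
  | zero => norm_num [← Matrix.one_fin_three]
  | succ n ih =>
    rw [pow_succ, ih]
    show _ * (!![1,1,0;0,1,1;0,0,1] : M) = _
    norm_num [Matrix.mul_fin_three]
    exact ⟨⟨by ring, by ring⟩, by ring⟩

lemma pow_Ai (n : ℕ) : (((Au⁻¹ : Mˣ) : M)) ^ n = !![1,-(n:ℚ),n*(n+1)/2;0,1,-(n:ℚ);0,0,1] := by
  induction n with
  | zero => norm_num [← Matrix.one_fin_three]
  | succ n ih =>
    rw [pow_succ, ih]
    show _ * (!![1,-1,1;0,1,-1;0,0,1] : M) = _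
    norm_num [Matrix.mul_fin_three]
    ring_nf

lemma zpow_entry (n : ℤ) : ((Au ^ n : Mˣ) : M) 0 1 = n := by
  cases n with
  | ofNat m =>
    rw [Int.ofNat_eq_coe, zpow_natCast, Units.val_pow_eq_pow_val, pow_A]
    norm_num
  | negSucc m =>
    rw [zpow_negSucc, ← inv_pow, Units.val_pow_eq_pow_val, pow_Ai]
    push_cast
    norm_num

lemma Au_zpow_inj {n m : ℤ} (h : Au ^ n = Au ^ m) : n = m := by
  have h1 : ((Au ^ n : Mˣ) : M) 0 1 = ((Au ^ m : Mˣ) : M) 0 1 := by rw [h]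
  rw [zpow_entry, zpow_entry] at h1
  exact_mod_cast h1

lemma φ_χ (p : Multiplicative (ℤ × ℤ)) :
    φ (χ p) = (Au ^ (Multiplicative.toAdd p).2,
      Multiplicative.ofAdd (Multiplicative.toAdd p).1) := by
  rw [χ_apply, map_mul, map_zpow, map_zpow, φx, φa]
  refine Prod.ext ?_ ?_
  · simp
  · simp [← ofAdd_zsmul]

lemma χ_inj : Function.Injective χ := by
  intro p q h
  have h2 := congrArg φ h
  rw [φ_χ, φ_χ, Prod.ext_iff] at h2
  have e1 : (Multiplicative.toAdd p).1 = (Multiplicative.toAdd q).1 := by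
    simpa using h2.2
  have e2 : (Multiplicative.toAdd p).2 = (Multiplicative.toAdd q).2 :=
    Au_zpow_inj h2.1
  have : Multiplicative.toAdd p = Multiplicative.toAdd q := Prod.ext e1 e2
  exact Multiplicative.toAdd.injective this

lemma mem1 : xbar ∈ Subgroup.closure {xbar, abar} :=
  Subgroup.subset_closure (Set.mem_insert _ _)

lemma mem2 : abar ∈ Subgroup.closure {xbar, abar} :=
  Subgroup.subset_closure (Set.mem_insert_of_mem _ rfl)

lemma hrange : χ.range = Subgroup.closure {xbar, abar} := by
  apply le_antisymm
  · rintro z ⟨p, rfl⟩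
    rw [χ_apply]
    exact mul_mem (zpow_mem mem1 _) (zpow_mem mem2 _)
  · rw [Subgroup.closure_le]
    intro z hz
    rcases hz with rfl | hz
    · exact ⟨Multiplicative.ofAdd (1, 0), by simp [χ_apply]⟩
    · rcases hz with rfl
      exact ⟨Multiplicative.ofAdd (0, 1), by simp [χ_apply]⟩

end ZxZAux

open GapGroup in
/-- In `G`, the subgroup generated by `x̄` and `ā` is free abelian of rank 2,
i.e. isomorphic to `ℤ × ℤ`. -/
theorem closure_xbar_abar_iso_zxz :
    Nonempty (↥(Subgroup.closure {xbar, abar}) ≃* Multiplicative (ℤ × ℤ)) := by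
  exact ⟨(MulEquiv.subgroupCongr ZxZAux.hrange.symm).trans
    (MonoidHom.ofInjective ZxZAux.χ_inj).symm⟩
end

section
/- In the group G, the subgroup generated by the images ā and b̄ is a free group of rank 2 (with ā, b̄ as a free basis). -/
namespace GapAux

open scoped commutatorElement

/-- The integral Heisenberg group, used to certify that `a`, `b` and `⁅a,b⁆`
have infinite order in the free group on two generators. -/
@[ext] structure Heis where
  p : ℤ
  q : ℤ
  r : ℤ

namespace Heis

instance : One Heis := ⟨⟨0, 0, 0⟩⟩
instance : Mul Heis := ⟨fun u v => ⟨u.p + v.p, u.q + v.q, u.r + v.r + u.p * v.q⟩⟩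
instance : Inv Heis := ⟨fun u => ⟨-u.p, -u.q, -u.r + u.p * u.q⟩⟩

@[simp] lemma one_p : (1 : Heis).p = 0 := rfl
@[simp] lemma one_q : (1 : Heis).q = 0 := rfl
@[simp] lemma one_r : (1 : Heis).r = 0 := rfl
@[simp] lemma mul_p (u v : Heis) : (u * v).p = u.p + v.p := rfl
@[simp] lemma mul_q (u v : Heis) : (u * v).q = u.q + v.q := rfl
@[simp] lemma mul_r (u v : Heis) : (u * v).r = u.r + v.r + u.p * v.q := rfl
@[simp] lemma inv_p (u : Heis) : u⁻¹.p = -u.p := rfl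
@[simp] lemma inv_q (u : Heis) : u⁻¹.q = -u.q := rfl
@[simp] lemma inv_r (u : Heis) : u⁻¹.r = -u.r + u.p * u.q := rfl

instance : Group Heis where
  mul_assoc u v w := by ext <;> simp <;> ring
  one_mul u := by ext <;> simp
  mul_one u := by ext <;> simp
  inv_mul_cancel u := by ext <;> simp <;> ring

/-- `A = (1,0,0)`. -/
def A : Heis := ⟨1, 0, 0⟩
/-- `B = (0,1,0)`. -/
def B : Heis := ⟨0, 1, 0⟩

lemma A_pow (n : ℕ) : A ^ n = ⟨n, 0, 0⟩ := by
  induction n with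
  | zero => rfl
  | succ n ih => rw [pow_succ, ih]; ext <;> simp [A] <;> push_cast <;> ring

lemma B_pow (n : ℕ) : B ^ n = ⟨0, n, 0⟩ := by
  induction n with
  | zero => rfl
  | succ n ih => rw [pow_succ, ih]; ext <;> simp [B] <;> push_cast <;> ring

lemma commAB : ⁅A, B⁆ = ⟨0, 0, 1⟩ := by
  ext <;> simp [commutatorElement_def, A, B]

lemma C_pow (n : ℕ) : (⟨0, 0, 1⟩ : Heis) ^ n = ⟨0, 0, n⟩ := by
  induction n with
  | zero => rfl
  | succ n ih => rw [pow_succ, ih]; ext <;> simp <;> push_cast <;> ring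

lemma not_finOrder_A : ¬ IsOfFinOrder A := by
  rw [isOfFinOrder_iff_pow_eq_one]
  rintro ⟨n, hn, h⟩
  rw [A_pow] at h
  have : (n : ℤ) = 0 := congrArg Heis.p h
  omega

lemma not_finOrder_B : ¬ IsOfFinOrder B := by
  rw [isOfFinOrder_iff_pow_eq_one]
  rintro ⟨n, hn, h⟩
  rw [B_pow] at h
  have : (n : ℤ) = 0 := congrArg Heis.q h
  omega

lemma not_finOrder_commAB : ¬ IsOfFinOrder ⁅A, B⁆ := by
  rw [commAB, isOfFinOrder_iff_pow_eq_one]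
  rintro ⟨n, hn, h⟩
  rw [C_pow] at h
  have : (n : ℤ) = 0 := congrArg Heis.r h
  omega

end Heis

/-! ### Infinite order of `a`, `b`, `⁅a,b⁆` in the free group on two generators -/

/-- The free group on two generators. -/
abbrev F : Type := FreeGroup (Fin 2)

/-- The generator `a` of `F`. -/
def fa : F := FreeGroup.of 0
/-- The generator `b` of `F`. -/
def fb : F := FreeGroup.of 1

/-- The homomorphism to the Heisenberg group. -/
def toHeis : F →* Heis := FreeGroup.lift (fun i : Fin 2 => if i = 0 then Heis.A else Heis.B)

@[simp] lemma toHeis_fa : toHeis fa = Heis.A := by simp [toHeis, fa]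
@[simp] lemma toHeis_fb : toHeis fb = Heis.B := by simp [toHeis, fb]

lemma not_finOrder_of_map {G H : Type*} [Group G] [Group H] (f : G →* H) {x : G}
    (h : ¬ IsOfFinOrder (f x)) : ¬ IsOfFinOrder x := by
  rw [isOfFinOrder_iff_pow_eq_one] at *
  rintro ⟨n, hn, hx⟩
  exact h ⟨n, hn, by rw [← map_pow, hx, map_one]⟩

lemma not_finOrder_fa : ¬ IsOfFinOrder fa :=
  not_finOrder_of_map toHeis (by simpa using Heis.not_finOrder_A)

lemma not_finOrder_fb : ¬ IsOfFinOrder fb :=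
  not_finOrder_of_map toHeis (by simpa using Heis.not_finOrder_B)

lemma not_finOrder_fc : ¬ IsOfFinOrder ⁅fa, fb⁆ := by
  refine not_finOrder_of_map toHeis ?_
  rw [map_commutatorElement, toHeis_fa, toHeis_fb]
  exact Heis.not_finOrder_commAB

/-! ### Isomorphisms between `zpowers` of infinite order elements -/

lemma zpowersHom_injective {G : Type*} [Group G] {u : G} (hu : ¬ IsOfFinOrder u) :
    Function.Injective (zpowersHom G u) := by
  have h := injective_zpow_iff_not_isOfFinOrder.2 hu
  intro m n hmn
  have : u ^ m.toAdd = u ^ n.toAdd := hmn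
  exact Multiplicative.toAdd.injective (h this)

/-- `ℤ ≃* zpowers u` for `u` of infinite order. -/
noncomputable def zEquiv {G : Type*} [Group G] {u : G} (hu : ¬ IsOfFinOrder u) :
    Multiplicative ℤ ≃* Subgroup.zpowers u :=
  (MonoidHom.ofInjective (zpowersHom_injective hu)).trans
    (MulEquiv.subgroupCongr (Subgroup.range_zpowersHom u))

lemma zEquiv_apply {G : Type*} [Group G] {u : G} (hu : ¬ IsOfFinOrder u) :
    zEquiv hu (Multiplicative.ofAdd 1) = ⟨u, Subgroup.mem_zpowers u⟩ := by
  ext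
  simp only [zEquiv, MulEquiv.trans_apply, MulEquiv.subgroupCongr_apply]
  show zpowersHom G u (Multiplicative.ofAdd 1) = u
  simp

/-- `zpowers u ≃* zpowers v` sending `u` to `v`, for `u, v` of infinite order. -/
noncomputable def zzEquiv {G H : Type*} [Group G] [Group H] {u : G} {v : H}
    (hu : ¬ IsOfFinOrder u) (hv : ¬ IsOfFinOrder v) :
    Subgroup.zpowers u ≃* Subgroup.zpowers v :=
  (zEquiv hu).symm.trans (zEquiv hv)

lemma zzEquiv_apply {G H : Type*} [Group G] [Group H] {u : G} {v : H}
    (hu : ¬ IsOfFinOrder u) (hv : ¬ IsOfFinOrder v) :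
    zzEquiv hu hv ⟨u, Subgroup.mem_zpowers u⟩ = ⟨v, Subgroup.mem_zpowers v⟩ := by
  have hsymm : (zEquiv hu).symm ⟨u, Subgroup.mem_zpowers u⟩ = Multiplicative.ofAdd 1 := by
    rw [MulEquiv.symm_apply_eq, zEquiv_apply]
  rw [zzEquiv, MulEquiv.trans_apply, hsymm, zEquiv_apply]

/-! ### The two HNN extensions -/

lemma not_finOrder_map_of_injective {G H : Type*} [Group G] [Group H] (f : G →* H)
    (hf : Function.Injective f) {x : G} (h : ¬ IsOfFinOrder x) : ¬ IsOfFinOrder (f x) := by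
  rw [isOfFinOrder_iff_pow_eq_one] at *
  rintro ⟨n, hn, hx⟩
  exact h ⟨n, hn, hf (by rw [map_pow, hx, map_one])⟩

/-- The first HNN extension: adjoin `s` with `s a s⁻¹ = ⁅a,b⁆`. -/
noncomputable abbrev H1 : Type :=
  HNNExtension F (Subgroup.zpowers fa) (Subgroup.zpowers ⁅fa, fb⁆)
    (zzEquiv not_finOrder_fa not_finOrder_fc)

noncomputable def i1 : F →* H1 := HNNExtension.of

lemma i1_injective : Function.Injective i1 := HNNExtension.of_injective (G := F) (A := Subgroup.zpowers fa)
  (B := Subgroup.zpowers ⁅fa, fb⁆) (φ := zzEquiv not_finOrder_fa not_finOrder_fc)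

lemma not_finOrder_i1_fb : ¬ IsOfFinOrder (i1 fb) :=
  not_finOrder_map_of_injective i1 i1_injective not_finOrder_fb

lemma not_finOrder_i1_fc : ¬ IsOfFinOrder (i1 ⁅fa, fb⁆) :=
  not_finOrder_map_of_injective i1 i1_injective not_finOrder_fc

/-- The second HNN extension: adjoin `t` with `t b t⁻¹ = ⁅a,b⁆`. -/
noncomputable abbrev H2 : Type :=
  HNNExtension H1 (Subgroup.zpowers (i1 fb)) (Subgroup.zpowers (i1 ⁅fa, fb⁆))
    (zzEquiv not_finOrder_i1_fb not_finOrder_i1_fc)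

noncomputable def i2 : H1 →* H2 := HNNExtension.of

lemma i2_injective : Function.Injective i2 := HNNExtension.of_injective (G := H1) (A := Subgroup.zpowers (i1 fb))
  (B := Subgroup.zpowers (i1 ⁅fa, fb⁆)) (φ := zzEquiv not_finOrder_i1_fb not_finOrder_i1_fc)

noncomputable def j : F →* H2 := i2.comp i1

lemma j_injective : Function.Injective j := i2_injective.comp i1_injective

/-- The conjugation relation in an HNN extension built from `zzEquiv`. -/
lemma hnn_conj {G : Type*} [Group G] {u v : G}
    (hu : ¬ IsOfFinOrder u) (hv : ¬ IsOfFinOrder v) :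
    (HNNExtension.t : HNNExtension G (Subgroup.zpowers u) (Subgroup.zpowers v) (zzEquiv hu hv)) *
      HNNExtension.of u * HNNExtension.t⁻¹ = HNNExtension.of v := by
  have h := HNNExtension.equiv_eq_conj (φ := zzEquiv hu hv) ⟨u, Subgroup.mem_zpowers u⟩
  rw [zzEquiv_apply hu hv] at h
  exact h.symm

lemma s_rel : i2 HNNExtension.t * j fa * (i2 HNNExtension.t)⁻¹ = ⁅j fa, j fb⁆ := by
  have h := hnn_conj not_finOrder_fa not_finOrder_fc
  have h2 := congrArg i2 h
  simp only [map_mul, map_inv] at h2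
  rw [show i2 (HNNExtension.of fa) = j fa from rfl,
    show i2 (HNNExtension.of ⁅fa, fb⁆) = j ⁅fa, fb⁆ from rfl] at h2
  rw [h2, map_commutatorElement]

lemma t_rel : HNNExtension.t * j fb * (HNNExtension.t)⁻¹ = ⁅j fa, j fb⁆ := by
  have h := hnn_conj not_finOrder_i1_fb not_finOrder_i1_fc
  rw [show HNNExtension.of (i1 fb) = j fb from rfl,
    show HNNExtension.of (i1 ⁅fa, fb⁆) = j ⁅fa, fb⁆ from rfl] at h
  rw [h, map_commutatorElement]

/-! ### The homomorphism `G →* H2` -/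

/-- Where the generators go. -/
noncomputable def genMap : Gen → H2
  | Gen.x => 1
  | Gen.y => 1
  | Gen.a => j fa
  | Gen.b => j fb
  | Gen.s => i2 HNNExtension.t
  | Gen.t => HNNExtension.t

lemma rels_killed : ∀ r ∈ GapGroup.rels, FreeGroup.lift genMap r = 1 := by
  intro r hr
  simp only [GapGroup.rels, Set.mem_insert_iff, Set.mem_singleton_iff] at hr
  rcases hr with rfl | rfl | rfl | rfl | rfl | rfl
  · simp [commutatorElement_def, genMap]
  · simp [commutatorElement_def, genMap]
  · simp [commutatorElement_def, genMap]
  · simp [commutatorElement_def, genMap]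
  · have := s_rel
    simp only [commutatorElement_def, map_mul, map_inv, FreeGroup.lift_apply_of, genMap]
    rw [show i2 HNNExtension.t * j fa * (i2 HNNExtension.t)⁻¹
        = j fa * j fb * (j fa)⁻¹ * (j fb)⁻¹ by
      rw [s_rel]; simp [commutatorElement_def]]
    group
  · simp only [commutatorElement_def, map_mul, map_inv, FreeGroup.lift_apply_of, genMap]
    rw [show HNNExtension.t * j fb * (HNNExtension.t)⁻¹
        = j fa * j fb * (j fa)⁻¹ * (j fb)⁻¹ by
      rw [t_rel]; simp [commutatorElement_def]]
    group

/-- The homomorphism `G →* H2`. -/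
noncomputable def ψ : GapGroup.G →* H2 := PresentedGroup.toGroup rels_killed

lemma ψ_comp : ∀ w : F,
    ψ (FreeGroup.lift (fun i : Fin 2 => if i = 0 then GapGroup.abar else GapGroup.bbar) w)
      = j w := by
  intro w
  have : ψ.comp (FreeGroup.lift (fun i : Fin 2 => if i = 0 then GapGroup.abar else GapGroup.bbar))
      = j := by
    apply FreeGroup.ext_hom
    intro i
    fin_cases i
    · simp only [MonoidHom.comp_apply, FreeGroup.lift_apply_of, if_pos rfl]
      show ψ (GapGroup.abar) = j fa
      rw [GapGroup.abar, ψ, PresentedGroup.toGroup.of]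
      rfl
    · simp only [MonoidHom.comp_apply, FreeGroup.lift_apply_of]
      rw [if_neg (by decide)]
      show ψ (GapGroup.bbar) = j fb
      rw [GapGroup.bbar, ψ, PresentedGroup.toGroup.of]
      rfl
  exact DFunLike.congr_fun this w

end GapAux

open GapGroup in
/-- In `G`, the subgroup generated by `ā` and `b̄` is free of rank 2, with `ā`, `b̄`
as a free basis: the homomorphism from the free group on two generators sending the
generators to `ā` and `b̄` is injective with range `⟨ā, b̄⟩`. -/
theorem closure_abar_bbar_free :
    Function.Injective (FreeGroup.lift (fun i : Fin 2 => if i = 0 then abar else bbar)) ∧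
    (FreeGroup.lift (fun i : Fin 2 => if i = 0 then abar else bbar)).range =
      Subgroup.closure {abar, bbar} := by
  constructor
  · have hcomp : GapAux.j = GapAux.ψ ∘
        (FreeGroup.lift (fun i : Fin 2 => if i = 0 then abar else bbar)) := by
      funext w
      exact (GapAux.ψ_comp w).symm
    have : Function.Injective (GapAux.ψ ∘
        (FreeGroup.lift (fun i : Fin 2 => if i = 0 then abar else bbar))) := by
      rw [← hcomp]; exact GapAux.j_injective
    exact Function.Injective.of_comp this
  · rw [FreeGroup.range_lift_eq_closure]
    congr 1
    ext g
    constructor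
    · rintro ⟨i, rfl⟩
      fin_cases i
      · left; simp
      · right
        show (if (1 : Fin 2) = 0 then abar else bbar) ∈ _
        rw [if_neg (by decide)]; rfl
    · rintro (rfl | rfl)
      · exact ⟨0, by simp⟩
      · refine ⟨1, ?_⟩
        show (if (1 : Fin 2) = 0 then abar else bbar) = bbar
        rw [if_neg (by decide)]
end

section
/- In the group G, the subgroup generated by the images x̄, ȳ, ā, b̄ is isomorphic to the direct product F₂ × F₂ of two free groups of rank 2, via an isomorphism sending x̄, ȳ to a free basis of the first factor and ā, b̄ to a free basis of the second factor. -/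
namespace GapHelper

open FreeGroup
open scoped commutatorElement

abbrev F2 := FreeGroup (Fin 2)

instance : Countable F2 := Function.Injective.countable FreeGroup.toWord_injective

/-- Right multiplication by `g⁻¹`, as a homomorphism to the permutation group. -/
def rmul (K : Type*) [Group K] : K →* Equiv.Perm K where
  toFun g := Equiv.mulRight g⁻¹
  map_one' := by ext x; simp
  map_mul' a b := by ext x; simp [mul_assoc]

lemma rmul_apply {K : Type*} [Group K] (g x : K) : rmul K g x = x * g⁻¹ := rfl

lemma rmul_injective (K : Type*) [Group K] : Function.Injective (rmul K) := by
  intro a b h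
  have := congrArg (fun e : Equiv.Perm K => e 1) h
  simpa [rmul_apply] using this

/-- Two right translations whose coset spaces are in bijection are conjugate in the
permutation group. -/
lemma exists_conj {K : Type*} [Group K] (g h : K)
    (hg : Function.Injective fun n : ℤ => g ^ n)
    (hh : Function.Injective fun n : ℤ => h ^ n)
    (e : (K ⧸ Subgroup.zpowers g) ≃ (K ⧸ Subgroup.zpowers h)) :
    ∃ S : Equiv.Perm K, ∀ x : K, S (x * g) = S x * h := by
  classical
  have key : ∀ (u : K), Function.Injective (fun n : ℤ => u ^ n) →
      Function.Bijective (fun p : (K ⧸ Subgroup.zpowers u) × ℤ => p.1.out * u ^ p.2) := by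
    intro u hu
    constructor
    · rintro ⟨q, n⟩ ⟨q', m⟩ hqm
      simp only at hqm
      have h1 : (QuotientGroup.mk (q.out * u ^ n) : K ⧸ Subgroup.zpowers u)
          = QuotientGroup.mk (q'.out * u ^ m) := by rw [hqm]
      rw [QuotientGroup.mk_mul_of_mem _ (Subgroup.zpow_mem_zpowers u n),
        QuotientGroup.mk_mul_of_mem _ (Subgroup.zpow_mem_zpowers u m),
        QuotientGroup.out_eq', QuotientGroup.out_eq'] at h1
      subst h1
      have h2 : u ^ n = u ^ m := mul_left_cancel hqm
      exact Prod.ext rfl (hu h2)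
    · intro x
      have h1 : (QuotientGroup.mk ((QuotientGroup.mk x : K ⧸ Subgroup.zpowers u).out) :
          K ⧸ Subgroup.zpowers u) = QuotientGroup.mk x := QuotientGroup.out_eq' _
      rw [QuotientGroup.eq] at h1
      obtain ⟨n, hn⟩ := Subgroup.mem_zpowers_iff.mp h1
      exact ⟨⟨QuotientGroup.mk x, n⟩, by simp [hn]⟩
  let Eg := Equiv.ofBijective _ (key g hg)
  let Eh := Equiv.ofBijective _ (key h hh)
  refine ⟨Eg.symm.trans ((Equiv.prodCongr e (Equiv.refl ℤ)).trans Eh), ?_⟩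
  intro x
  set p := Eg.symm x with hp
  have hx : p.1.out * g ^ p.2 = x := Eg.apply_symm_apply x
  have hxg : Eg.symm (x * g) = (p.1, p.2 + 1) := by
    apply Eg.injective
    rw [Equiv.apply_symm_apply]
    show x * g = (p.1, p.2 + 1).1.out * g ^ (p.1, p.2 + 1).2
    rw [zpow_add_one, ← mul_assoc, hx]
  have hSx : ∀ y : K, (Eg.symm.trans ((Equiv.prodCongr e (Equiv.refl ℤ)).trans Eh)) y
      = (e (Eg.symm y).1).out * h ^ (Eg.symm y).2 := by
    intro y
    rfl
  rw [hSx, hSx, hxg, ← hp]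
  show (e p.1).out * h ^ (p.2 + 1) = (e p.1).out * h ^ p.2 * h
  rw [zpow_add_one, mul_assoc]

/-- Exponent-sum homomorphisms. -/
def expgen (i : Fin 2) : F2 →* Multiplicative ℤ :=
  FreeGroup.lift (fun j => Multiplicative.ofAdd (if j = i then 1 else 0))

lemma expgen_of (i j : Fin 2) :
    Multiplicative.toAdd (expgen i (of j)) = if j = i then 1 else 0 := by
  simp [expgen]

lemma infinite_quot (g t : F2) (i : Fin 2)
    (hg : Multiplicative.toAdd (expgen i g) = 0)
    (ht : Multiplicative.toAdd (expgen i t) = 1) :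
    Infinite (F2 ⧸ Subgroup.zpowers g) := by
  apply Infinite.of_injective
    (fun n : ℕ => (QuotientGroup.mk (t ^ n) : F2 ⧸ Subgroup.zpowers g))
  intro n m hnm
  rw [QuotientGroup.eq] at hnm
  obtain ⟨k, hk⟩ := Subgroup.mem_zpowers_iff.mp hnm
  have := congrArg (fun w => Multiplicative.toAdd (expgen i w)) hk
  simp [hg, ht] at this
  omega

lemma inj_zpow_of_esum (g : F2) (i : Fin 2)
    (hg : Multiplicative.toAdd (expgen i g) = 1) :
    Function.Injective fun n : ℤ => g ^ n := by
  intro n m hnm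
  have := congrArg (fun w => Multiplicative.toAdd (expgen i w)) hnm
  simpa [map_zpow, hg] using this

lemma inj_zpow_inv {K : Type*} [Group K] {g : K}
    (h : Function.Injective fun n : ℤ => g ^ n) :
    Function.Injective fun n : ℤ => g⁻¹ ^ n := by
  intro n m hnm
  simp only [inv_zpow] at hnm
  exact h (inv_injective hnm)

def piZ : F2 →* Equiv.Perm ℤ := FreeGroup.lift ![Equiv.addLeft (1 : ℤ), Equiv.neg ℤ]

lemma piZ_comm : piZ ⁅of (0 : Fin 2), of (1 : Fin 2)⁆ = Equiv.addLeft (2 : ℤ) := by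
  ext x
  simp [piZ, commutatorElement_def, Equiv.Perm.mul_apply, Equiv.Perm.inv_def, Equiv.neg_symm]
  ring

lemma addLeft_zpow_apply (n : ℤ) : ((Equiv.addLeft (2 : ℤ)) ^ n) 0 = 2 * n := by
  have key : ∀ x : ℤ, ((Equiv.addLeft (2 : ℤ)) ^ n) x = 2 * n + x := by
    induction n using Int.induction_on with
    | zero => intro x; simp
    | succ k ih => intro x; rw [zpow_add_one, Equiv.Perm.mul_apply, ih]; simp; ring
    | pred k ih =>
        intro x; rw [zpow_sub_one, Equiv.Perm.mul_apply, ih]; simp [Equiv.Perm.inv_def]; ring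
  simpa using key 0

lemma inj_zpow_comm : Function.Injective fun n : ℤ => ⁅of (0 : Fin 2), of (1 : Fin 2)⁆ ^ n := by
  intro n m hnm
  have := congrArg (fun w => ((piZ w) : Equiv.Perm ℤ) 0) hnm
  simp only [map_zpow, piZ_comm] at this
  have h2 := addLeft_zpow_apply n
  have h3 := addLeft_zpow_apply m
  omega

open GapGroup

instance (g : F2) : Countable (F2 ⧸ Subgroup.zpowers g) := Quotient.countable

lemma rel_one {r : FreeGroup Gen} (hr : r ∈ rels) : (PresentedGroup.mk rels r : G) = 1 :=
  (QuotientGroup.eq_one_iff r).mpr (Subgroup.subset_normalClosure hr)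

lemma comm_gen : ∀ i j : Fin 2, Commute ((![xbar, ybar] : Fin 2 → G) i)
    ((![abar, bbar] : Fin 2 → G) j) := by
  have key : ∀ (u v : Gen), ⁅FreeGroup.of u, FreeGroup.of v⁆ ∈ rels →
      Commute (PresentedGroup.of u : G) (PresentedGroup.of v) := by
    intro u v huv
    rw [← commutatorElement_eq_one_iff_commute]
    have := rel_one huv
    rw [map_commutatorElement] at this
    exact this
  intro i j
  fin_cases i <;> fin_cases j <;>
    [exact key Gen.x Gen.a (by simp [rels]); exact key Gen.x Gen.b (by simp [rels]);
     exact key Gen.y Gen.a (by simp [rels]); exact key Gen.y Gen.b (by simp [rels])]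

/-- The abbreviation `c = [α, β]` in the free group on two generators. -/
def cc : F2 := ⁅of (0 : Fin 2), of (1 : Fin 2)⁆

/-- The defining data of the retraction `G → F₂` killing `a, b, s, t`. -/
def gen1 : Gen → F2
  | Gen.x => of 0
  | Gen.y => of 1
  | _ => 1

lemma hrels1 : ∀ r ∈ rels, FreeGroup.lift gen1 r = 1 := by
  intro r hr
  simp only [rels, Set.mem_insert_iff, Set.mem_singleton_iff] at hr
  rcases hr with rfl | rfl | rfl | rfl | rfl | rfl <;>
    simp [commutatorElement_def, gen1]

/-- The retraction `G → F₂` killing `a, b, s, t`. -/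
def psi1 : G →* F2 := PresentedGroup.toGroup hrels1

/-- The defining data of the homomorphism `G → Perm F₂` given `S, T`. -/
def gen2 (S T : Equiv.Perm F2) : Gen → Equiv.Perm F2
  | Gen.x => 1
  | Gen.y => 1
  | Gen.a => rmul F2 (of 0)
  | Gen.b => rmul F2 (of 1)
  | Gen.s => S
  | Gen.t => T

lemma conj_eq_rmul (S : Equiv.Perm F2) (g : F2)
    (hS : ∀ x : F2, S (x * g⁻¹) = S x * cc⁻¹) :
    S * rmul F2 g * S⁻¹ = rmul F2 cc := by
  ext x
  rw [Equiv.Perm.mul_apply, Equiv.Perm.mul_apply]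
  have h1 : (S⁻¹ : Equiv.Perm F2) x = S.symm x := rfl
  rw [h1, rmul_apply, hS, Equiv.apply_symm_apply, rmul_apply]

lemma hrels2 (S T : Equiv.Perm F2)
    (hS : ∀ x : F2, S (x * (of (0 : Fin 2))⁻¹) = S x * cc⁻¹)
    (hT : ∀ x : F2, T (x * (of (1 : Fin 2))⁻¹) = T x * cc⁻¹) :
    ∀ r ∈ rels, FreeGroup.lift (gen2 S T) r = 1 := by
  have hcomm : ⁅rmul F2 (of (0 : Fin 2)), rmul F2 (of (1 : Fin 2))⁆ = rmul F2 cc :=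
    (map_commutatorElement (rmul F2) _ _).symm
  intro r hr
  simp only [rels, Set.mem_insert_iff, Set.mem_singleton_iff] at hr
  rcases hr with rfl | rfl | rfl | rfl | rfl | rfl
  · simp [commutatorElement_def, gen2]
  · simp [commutatorElement_def, gen2]
  · simp [commutatorElement_def, gen2]
  · simp [commutatorElement_def, gen2]
  · have key := conj_eq_rmul S _ hS
    simp only [_root_.map_mul, _root_.map_inv, map_commutatorElement, FreeGroup.lift_apply_of]
    show gen2 S T Gen.s * gen2 S T Gen.a * (gen2 S T Gen.s)⁻¹ *
      ⁅gen2 S T Gen.a, gen2 S T Gen.b⁆⁻¹ = 1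
    show S * rmul F2 (of 0) * S⁻¹ * ⁅rmul F2 (of 0), rmul F2 (of 1)⁆⁻¹ = 1
    rw [hcomm, key, mul_inv_cancel]
  · have key := conj_eq_rmul T _ hT
    simp only [_root_.map_mul, _root_.map_inv, map_commutatorElement, FreeGroup.lift_apply_of]
    show T * rmul F2 (of 1) * T⁻¹ * ⁅rmul F2 (of 0), rmul F2 (of 1)⁆⁻¹ = 1
    rw [hcomm, key, mul_inv_cancel]

lemma closure_four :
    Subgroup.closure {((of (0 : Fin 2) : F2), (1 : F2)), ((of 1 : F2), (1 : F2)),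
      ((1 : F2), (of 0 : F2)), ((1 : F2), (of 1 : F2))} = (⊤ : Subgroup (F2 × F2)) := by
  rw [eq_top_iff]
  rintro ⟨w, v⟩ -
  have h1 : ∀ u : F2, ((u, (1 : F2)) : F2 × F2) ∈ Subgroup.closure
      {((of (0 : Fin 2) : F2), (1 : F2)), ((of 1 : F2), (1 : F2)),
        ((1 : F2), (of 0 : F2)), ((1 : F2), (of 1 : F2))} := by
    intro u
    induction u using FreeGroup.induction_on with
    | C1 => exact Subgroup.one_mem _
    | of i =>
        apply Subgroup.subset_closure
        fin_cases i
        · exact Set.mem_insert _ _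
        · exact Set.mem_insert_of_mem _ (Set.mem_insert _ _)
    | inv_of i ih =>
        simpa using Subgroup.inv_mem _ ih
    | mul u1 u2 ih1 ih2 =>
        simpa using Subgroup.mul_mem _ ih1 ih2
  have h2 : ∀ u : F2, (((1 : F2), u) : F2 × F2) ∈ Subgroup.closure
      {((of (0 : Fin 2) : F2), (1 : F2)), ((of 1 : F2), (1 : F2)),
        ((1 : F2), (of 0 : F2)), ((1 : F2), (of 1 : F2))} := by
    intro u
    induction u using FreeGroup.induction_on with
    | C1 => exact Subgroup.one_mem _
    | of i =>
        apply Subgroup.subset_closure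
        fin_cases i
        · exact Set.mem_insert_of_mem _ (Set.mem_insert_of_mem _ (Set.mem_insert _ _))
        · exact Set.mem_insert_of_mem _ (Set.mem_insert_of_mem _
            (Set.mem_insert_of_mem _ rfl))
    | inv_of i ih =>
        simpa using Subgroup.inv_mem _ ih
    | mul u1 u2 ih1 ih2 =>
        simpa using Subgroup.mul_mem _ ih1 ih2
  have : ((w, v) : F2 × F2) = (w, (1 : F2)) * ((1 : F2), v) := by simp [Prod.ext_iff]
  rw [this]
  exact Subgroup.mul_mem _ (h1 w) (h2 v)

end GapHelper

open GapGroup in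
/-- In `G`, the subgroup generated by `x̄, ȳ, ā, b̄` is isomorphic to `F₂ × F₂`, via an
isomorphism (realised as an injective homomorphism `φ` from `F₂ × F₂` onto this subgroup)
sending the free basis of the first factor to `x̄, ȳ` and of the second factor to `ā, b̄`. -/
theorem closure_xyab_iso_f2_prod_f2 :
    ∃ φ : FreeGroup (Fin 2) × FreeGroup (Fin 2) →* G,
      Function.Injective φ ∧
      φ.range = Subgroup.closure {xbar, ybar, abar, bbar} ∧
      φ (FreeGroup.of 0, 1) = xbar ∧ φ (FreeGroup.of 1, 1) = ybar ∧
      φ (1, FreeGroup.of 0) = abar ∧ φ (1, FreeGroup.of 1) = bbar := by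
  classical
  let f1 : FreeGroup (Fin 2) →* G := FreeGroup.lift ![xbar, ybar]
  let f2 : FreeGroup (Fin 2) →* G := FreeGroup.lift ![abar, bbar]
  have comm : ∀ w v : FreeGroup (Fin 2), Commute (f1 w) (f2 v) := by
    have base : ∀ (i : Fin 2) (v : FreeGroup (Fin 2)),
        Commute (f1 (FreeGroup.of i)) (f2 v) := by
      intro i v
      induction v using FreeGroup.induction_on with
      | C1 => simpa using Commute.one_right _
      | of j =>
          exact (by simpa [f1, f2] using GapHelper.comm_gen i j :
            Commute (f1 (FreeGroup.of i)) (f2 (FreeGroup.of j)))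
      | inv_of j ih => simpa using ih.inv_right
      | mul u1 u2 ih1 ih2 => simpa [map_mul] using ih1.mul_right ih2
    intro w v
    induction w using FreeGroup.induction_on with
    | C1 => simpa using Commute.one_left _
    | of i => exact base i v
    | inv_of i ih => simpa using ih.inv_left
    | mul u1 u2 ih1 ih2 => simpa [map_mul] using ih1.mul_left ih2
  set φ := f1.noncommCoprod f2 comm with hφ
  have hevx : φ (FreeGroup.of 0, 1) = xbar := by
    simp [hφ, MonoidHom.noncommCoprod_apply, f1, f2]
  have hevy : φ (FreeGroup.of 1, 1) = ybar := by
    simp [hφ, MonoidHom.noncommCoprod_apply, f1, f2]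
  have heva : φ (1, FreeGroup.of 0) = abar := by
    simp [hφ, MonoidHom.noncommCoprod_apply, f1, f2]
  have hevb : φ (1, FreeGroup.of 1) = bbar := by
    simp [hφ, MonoidHom.noncommCoprod_apply, f1, f2]
  refine ⟨φ, ?_, ?_, hevx, hevy, heva, hevb⟩
  · -- injectivity
    rw [injective_iff_map_eq_one]
    rintro ⟨w, v⟩ h1
    rw [hφ, MonoidHom.noncommCoprod_apply] at h1
    have e1 : GapHelper.psi1.comp f1 = MonoidHom.id _ := by
      apply FreeGroup.ext_hom
      intro i
      fin_cases i <;>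
        simp [f1, GapHelper.psi1, xbar, ybar, GapHelper.gen1]
    have e2 : GapHelper.psi1.comp f2 = 1 := by
      apply FreeGroup.ext_hom
      intro i
      fin_cases i <;>
        simp [f2, GapHelper.psi1, abar, bbar, GapHelper.gen1]
    have hw1 : GapHelper.psi1 (f1 w) = w := by
      rw [← MonoidHom.comp_apply, e1]; rfl
    have hw2 : GapHelper.psi1 (f2 v) = 1 := by
      rw [← MonoidHom.comp_apply, e2]; rfl
    have hw : w = 1 := by
      have h2 := congrArg GapHelper.psi1 h1
      rw [map_mul, hw1, hw2, mul_one, map_one] at h2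
      exact h2
    subst hw
    rw [map_one, one_mul] at h1
    -- now kill v using the permutation representation
    have hinj0 : Function.Injective fun n : ℤ => (FreeGroup.of (0 : Fin 2) : GapHelper.F2) ^ n :=
      GapHelper.inj_zpow_of_esum _ 0 (by simp [GapHelper.expgen])
    have hinj1 : Function.Injective fun n : ℤ => (FreeGroup.of (1 : Fin 2) : GapHelper.F2) ^ n :=
      GapHelper.inj_zpow_of_esum _ 1 (by simp [GapHelper.expgen])
    have hinjc : Function.Injective fun n : ℤ => (GapHelper.cc : GapHelper.F2) ^ n :=
      GapHelper.inj_zpow_comm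
    have i1 : Infinite (GapHelper.F2 ⧸ Subgroup.zpowers (FreeGroup.of (0 : Fin 2) : GapHelper.F2)⁻¹) :=
      GapHelper.infinite_quot _ (FreeGroup.of 1) 1 (by simp [GapHelper.expgen])
        (by simp [GapHelper.expgen])
    have i2 : Infinite (GapHelper.F2 ⧸ Subgroup.zpowers (GapHelper.cc : GapHelper.F2)⁻¹) :=
      GapHelper.infinite_quot _ (FreeGroup.of 0) 0
        (by simp [GapHelper.cc, commutatorElement_def, GapHelper.expgen])
        (by simp [GapHelper.expgen])
    have i3 : Infinite (GapHelper.F2 ⧸ Subgroup.zpowers (FreeGroup.of (1 : Fin 2) : GapHelper.F2)⁻¹) :=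
      GapHelper.infinite_quot _ (FreeGroup.of 0) 0 (by simp [GapHelper.expgen])
        (by simp [GapHelper.expgen])
    have d1 := (nonempty_denumerable
      (GapHelper.F2 ⧸ Subgroup.zpowers (FreeGroup.of (0 : Fin 2) : GapHelper.F2)⁻¹)).some
    have d2 := (nonempty_denumerable
      (GapHelper.F2 ⧸ Subgroup.zpowers (GapHelper.cc : GapHelper.F2)⁻¹)).some
    have d3 := (nonempty_denumerable
      (GapHelper.F2 ⧸ Subgroup.zpowers (FreeGroup.of (1 : Fin 2) : GapHelper.F2)⁻¹)).some
    letI := d1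
    letI := d2
    letI := d3
    obtain ⟨S, hS⟩ := GapHelper.exists_conj _ _
      (GapHelper.inj_zpow_inv hinj0) (GapHelper.inj_zpow_inv hinjc)
      ((Denumerable.eqv _).trans (Denumerable.eqv _).symm)
    obtain ⟨T, hT⟩ := GapHelper.exists_conj _ _
      (GapHelper.inj_zpow_inv hinj1) (GapHelper.inj_zpow_inv hinjc)
      ((Denumerable.eqv _).trans (Denumerable.eqv _).symm)
    let psi2 : G →* Equiv.Perm GapHelper.F2 :=
      PresentedGroup.toGroup (GapHelper.hrels2 S T hS hT)
    have e3 : psi2.comp f2 = GapHelper.rmul GapHelper.F2 := by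
      apply FreeGroup.ext_hom
      intro i
      fin_cases i <;>
        simp [f2, psi2, abar, bbar, GapHelper.gen2]
    have hv : GapHelper.rmul GapHelper.F2 v = 1 := by
      rw [← e3, MonoidHom.comp_apply, h1, map_one]
    have hv1 : v = 1 := GapHelper.rmul_injective _ (hv.trans (map_one _).symm)
    simp [hv1]
  · -- range
    rw [MonoidHom.range_eq_map, ← GapHelper.closure_four, MonoidHom.map_closure]
    congr 1
    simp only [Set.image_insert_eq, Set.image_singleton]
    rw [hevx, hevy, heva, hevb]
end
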